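/- Let k ≥ 2 and n ≥ 1, and let E′ be a set of edges of the de Bruijn graph G_n^k such that for every vertex v of G_n^k, the in-degree of v in E′ equals the out-degree of v in E′, and the total degree of v in E′ is at least two (equivalently, v has at least one incoming and one outgoing edge in E′). Then there exists a set E of edges of G_n^k such that every vertex has the same in-degree and out-degree in E as in E′ (in particular |E| = |E′|), and E is connected, i.e., any two vertices of G_n^k are joined by a walk using edges of E (traversed in either direction). -/

import Mathlib

/-- `deBruijnEdge n x y` holds iff `(x, y)` is an edge of the `k`-ary de Bruijn
graph of order `n`. -/
def deBruijnEdge {k : ℕ} (n : ℕ) (x y : List (Fin k)) : Prop :=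
  ∃ (a b : Fin k) (t : List (Fin k)), t.length = n - 1 ∧ x = a :: t ∧ y = t ++ [b]

/-- The in-degree of a vertex `v` in a finite set `E` of directed edges. -/
def inDeg {V : Type*} [DecidableEq V] (E : Finset (V × V)) (v : V) : ℕ :=
  (E.filter (fun e => e.2 = v)).card

/-- The out-degree of a vertex `v` in a finite set `E` of directed edges. -/
def outDeg {V : Type*} [DecidableEq V] (E : Finset (V × V)) (v : V) : ℕ :=
  (E.filter (fun e => e.1 = v)).card


set_option linter.unusedSectionVars false

section Aux

open Finset Relation


variable {V : Type*} [Fintype V] [DecidableEq V]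

open scoped Classical

lemma sum_out (E : Finset (V × V)) (R : Finset V) :
    ∑ v ∈ R, outDeg E v = (E.filter (fun e => e.1 ∈ R)).card := by
  rw [Finset.card_eq_sum_card_fiberwise (f := Prod.fst) (s := E.filter (fun e => e.1 ∈ R)) (t := R)
    (fun e he => (Finset.mem_filter.mp he).2)]
  apply Finset.sum_congr rfl
  intro v hv
  unfold outDeg
  congr 1
  ext e
  simp only [Finset.mem_filter]
  constructor
  · rintro ⟨he, h1⟩; exact ⟨⟨he, h1 ▸ hv⟩, h1⟩
  · rintro ⟨⟨he, _⟩, h1⟩; exact ⟨he, h1⟩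

lemma sum_in (E : Finset (V × V)) (R : Finset V) :
    ∑ v ∈ R, inDeg E v = (E.filter (fun e => e.2 ∈ R)).card := by
  rw [Finset.card_eq_sum_card_fiberwise (f := Prod.snd) (s := E.filter (fun e => e.2 ∈ R)) (t := R)
    (fun e he => (Finset.mem_filter.mp he).2)]
  apply Finset.sum_congr rfl
  intro v hv
  unfold inDeg
  congr 1
  ext e
  simp only [Finset.mem_filter]
  constructor
  · rintro ⟨he, h1⟩; exact ⟨⟨he, h1 ▸ hv⟩, h1⟩
  · rintro ⟨⟨he, _⟩, h1⟩; exact ⟨he, h1⟩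

/-- In a balanced digraph every edge lies on a directed cycle: there is a
directed path from `x` back to `u` avoiding the edge `(u,x)`. -/
lemma exists_return {E : Finset (V × V)} (hbal : ∀ v, inDeg E v = outDeg E v)
    {u x : V} (he : (u, x) ∈ E) :
    Relation.ReflTransGen (fun a b => (a, b) ∈ E.erase (u, x)) x u := by
  by_contra hcon
  set r : V → V → Prop := fun a b => (a, b) ∈ E.erase (u, x) with hr
  set R : Finset V := univ.filter (fun w => Relation.ReflTransGen r x w) with hRdef
  have hxR : x ∈ R := by
    simp only [hRdef, Finset.mem_filter, Finset.mem_univ, true_and]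
    exact Relation.ReflTransGen.refl
  have huR : u ∉ R := by simpa [hRdef] using hcon
  have hclosed : ∀ e' ∈ E, e' ≠ (u, x) → e'.1 ∈ R → e'.2 ∈ R := by
    intro e' he' hne h1
    simp only [hRdef, Finset.mem_filter, Finset.mem_univ, true_and] at h1 ⊢
    refine h1.tail ?_
    show (e'.1, e'.2) ∈ E.erase (u, x)
    exact Finset.mem_erase.mpr ⟨by simpa using hne, by simpa using he'⟩
  have hsub : E.filter (fun e => e.1 ∈ R) ⊆ E.filter (fun e => e.2 ∈ R) := by
    intro e' h
    rw [Finset.mem_filter] at h ⊢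
    refine ⟨h.1, hclosed e' h.1 (fun hEq => huR (by rw [hEq] at h; exact h.2)) h.2⟩
  have hcard : (E.filter (fun e => e.2 ∈ R)).card ≤ (E.filter (fun e => e.1 ∈ R)).card := by
    rw [← sum_out, ← sum_in]
    exact le_of_eq (Finset.sum_congr rfl (fun v _ => hbal v))
  have heq := Finset.eq_of_subset_of_card_le hsub hcard
  have : (u, x) ∈ E.filter (fun e => e.1 ∈ R) := by
    rw [heq]; exact Finset.mem_filter.mpr ⟨he, hxR⟩
  exact huR (Finset.mem_filter.mp this).2

/-- Weak (undirected) step relation. -/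
def wStep (E : Finset (V × V)) (a b : V) : Prop := (a, b) ∈ E ∨ (b, a) ∈ E

def Conn (E : Finset (V × V)) (a b : V) : Prop := Relation.ReflTransGen (wStep E) a b

lemma wStep_symm (E : Finset (V × V)) : Symmetric (wStep E) := fun _ _ h => h.symm

lemma conn_symm {E : Finset (V × V)} {a b : V} (h : Conn E a b) : Conn E b a :=
  by haveI : Std.Symm (wStep E) := ⟨wStep_symm E⟩; exact Std.Symm.symm (r := Relation.ReflTransGen (wStep E)) _ _ h

lemma conn_trans {E : Finset (V × V)} {a b c : V} (h : Conn E a b) (h' : Conn E b c) :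
    Conn E a c := h.trans h'

lemma conn_of_mem {E : Finset (V × V)} {a b : V} (h : (a, b) ∈ E) : Conn E a b :=
  Relation.ReflTransGen.single (Or.inl h)

/-- The edge set of the weak component of `u` is balanced if `E` is. -/
lemma comp_balanced {E : Finset (V × V)} (hbal : ∀ v, inDeg E v = outDeg E v) (u : V) :
    ∀ w, inDeg (E.filter (fun e => Conn E u e.1)) w = outDeg (E.filter (fun e => Conn E u e.1)) w := by
  intro w
  unfold inDeg outDeg
  rw [Finset.filter_filter, Finset.filter_filter]
  by_cases hcw : Conn E u w
  · have h1 : (E.filter (fun e => Conn E u e.1 ∧ e.2 = w)) = E.filter (fun e => e.2 = w) := by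
      apply Finset.filter_congr
      intro e he
      constructor
      · rintro ⟨_, h2⟩; exact h2
      · intro h2
        refine ⟨conn_trans hcw (conn_symm (conn_of_mem (a := e.1) (b := w) ?_)), h2⟩
        rw [← h2]; exact he
    have h2 : (E.filter (fun e => Conn E u e.1 ∧ e.1 = w)) = E.filter (fun e => e.1 = w) := by
      apply Finset.filter_congr
      intro e he
      constructor
      · rintro ⟨_, h2⟩; exact h2
      · intro h2; exact ⟨h2 ▸ hcw, h2⟩
    rw [h1, h2]; exact hbal w
  · have h1 : (E.filter (fun e => Conn E u e.1 ∧ e.2 = w)) = ∅ := by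
      rw [Finset.filter_eq_empty_iff]
      rintro e he ⟨h3, h2⟩
      exact hcw (conn_trans h3 (conn_of_mem (h2 ▸ he)))
    have h2 : (E.filter (fun e => Conn E u e.1 ∧ e.1 = w)) = ∅ := by
      rw [Finset.filter_eq_empty_iff]
      rintro e he ⟨h3, h2⟩
      exact hcw (h2 ▸ h3)
    rw [h1, h2]

lemma filter_card_eq {E₂ E : Finset (V × V)} {u v x y : V}
    (hD : E₂ = insert (u, v) (insert (y, x) ((E.erase (u, x)).erase (y, v))))
    (hux : (u, x) ∈ E) (hyv : (y, v) ∈ E) (hne : (u, x) ≠ (y, v))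
    (huvE : (u, v) ∉ E) (hyxE : (y, x) ∉ E) (hne2 : (u, v) ≠ (y, x))
    (f : V × V → ℕ) (hf : f (u, v) + f (y, x) = f (u, x) + f (y, v)) :
    ∑ e ∈ E₂, f e = ∑ e ∈ E, f e := by
  have hyvD : (y, v) ∈ E.erase (u, x) := Finset.mem_erase.mpr ⟨Ne.symm hne, hyv⟩
  have hD1 : (u, v) ∉ insert (y, x) ((E.erase (u, x)).erase (y, v)) := by
    intro h
    rcases Finset.mem_insert.mp h with h | h
    · exact hne2 h
    · exact huvE (Finset.mem_of_mem_erase (Finset.mem_of_mem_erase h))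
  have hD2 : (y, x) ∉ (E.erase (u, x)).erase (y, v) := by
    intro h
    exact hyxE (Finset.mem_of_mem_erase (Finset.mem_of_mem_erase h))
  rw [hD, Finset.sum_insert hD1, Finset.sum_insert hD2,
    ← Finset.add_sum_erase _ f hux, ← Finset.add_sum_erase _ f hyvD]
  omega

lemma swap_lemma {E : Finset (V × V)} (hbal : ∀ w, inDeg E w = outDeg E w)
    {u v x y : V} (hnc : ¬ Conn E u v) (hux : (u, x) ∈ E) (hyv : (y, v) ∈ E) :
    ∃ E₂ : Finset (V × V),
      (∀ w, inDeg E₂ w = inDeg E w) ∧ (∀ w, outDeg E₂ w = outDeg E w) ∧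
      (∀ a b, Conn E a b → Conn E₂ a b) ∧ Conn E₂ u v ∧
      (∀ e ∈ E₂, e ∈ E ∨ e = (u, v) ∨ e = (y, x)) := by
  have hCux : Conn E u x := conn_of_mem hux
  have hCyv : Conn E y v := conn_of_mem hyv
  have huvE : (u, v) ∉ E := fun h => hnc (conn_of_mem h)
  have hyxE : (y, x) ∉ E := fun h =>
    hnc (conn_trans hCux (conn_trans (conn_symm (conn_of_mem h)) hCyv))
  have hne : (u, x) ≠ (y, v) := by
    intro h
    have h1 : u = y := congrArg Prod.fst h
    exact hnc (h1 ▸ hCyv)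
  have hne2 : (u, v) ≠ (y, x) := by
    intro h
    have h1 : u = y := congrArg Prod.fst h
    exact hnc (h1 ▸ hCyv)
  set D : Finset (V × V) := (E.erase (u, x)).erase (y, v) with hDdef
  set E₂ : Finset (V × V) := insert (u, v) (insert (y, x) D) with hE₂def
  have hDsub : ∀ e ∈ D, e ∈ E ∧ e ≠ (u, x) ∧ e ≠ (y, v) := by
    intro e hD
    refine ⟨Finset.mem_of_mem_erase (Finset.mem_of_mem_erase hD),
      Finset.ne_of_mem_erase (Finset.mem_of_mem_erase hD), Finset.ne_of_mem_erase hD⟩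
  have hDE₂ : ∀ e ∈ D, e ∈ E₂ := by
    intro e hD
    exact Finset.mem_insert_of_mem (Finset.mem_insert_of_mem hD)
  -- path from x back to u inside E₂
  have hxu : Conn E₂ x u := by
    set CU : Finset (V × V) := E.filter (fun e => Conn E u e.1) with hCU
    have hbalCU := comp_balanced hbal u
    have huxCU : (u, x) ∈ CU := Finset.mem_filter.mpr ⟨hux, Relation.ReflTransGen.refl⟩
    have hret := exists_return hbalCU huxCU
    refine Relation.ReflTransGen.mono ?_ _ _ hret
    intro a b hab
    have h1 := Finset.mem_of_mem_erase hab
    have h2 := Finset.ne_of_mem_erase hab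
    rw [Finset.mem_filter] at h1
    have hD : (a, b) ∈ D := by
      refine Finset.mem_erase.mpr ⟨?_, Finset.mem_erase.mpr ⟨h2, h1.1⟩⟩
      intro h
      have ha : a = y := congrArg Prod.fst h
      exact hnc (conn_trans (ha ▸ h1.2) hCyv)
    exact Or.inl (hDE₂ _ hD)
  -- path from v back to y inside E₂
  have hvy : Conn E₂ v y := by
    set CV : Finset (V × V) := E.filter (fun e => Conn E v e.1) with hCV
    have hbalCV := comp_balanced hbal v
    have hyvCV : (y, v) ∈ CV := Finset.mem_filter.mpr ⟨hyv, conn_symm hCyv⟩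
    have hret := exists_return hbalCV hyvCV
    refine Relation.ReflTransGen.mono ?_ _ _ hret
    intro a b hab
    have h1 := Finset.mem_of_mem_erase hab
    have h2 := Finset.ne_of_mem_erase hab
    rw [Finset.mem_filter] at h1
    have hD : (a, b) ∈ D := by
      refine Finset.mem_erase.mpr ⟨h2, Finset.mem_erase.mpr ⟨?_, h1.1⟩⟩
      intro h
      have ha : a = u := congrArg Prod.fst h
      exact hnc (conn_symm (ha ▸ h1.2))
    exact Or.inl (hDE₂ _ hD)
  have hstep : ∀ p q : V, (p, q) ∈ E → Conn E₂ p q := by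
    intro p q hpq
    by_cases h1 : (p, q) = (u, x)
    · have hp : p = u := congrArg Prod.fst h1
      have hq : q = x := congrArg Prod.snd h1
      subst hp; subst hq
      exact conn_symm hxu
    by_cases h2 : (p, q) = (y, v)
    · have hp : p = y := congrArg Prod.fst h2
      have hq : q = v := congrArg Prod.snd h2
      subst hp; subst hq
      exact conn_symm hvy
    · exact conn_of_mem (hDE₂ _ (Finset.mem_erase.mpr ⟨h2, Finset.mem_erase.mpr ⟨h1, hpq⟩⟩))
  refine ⟨E₂, ?_, ?_, ?_, ?_, ?_⟩
  · intro w
    unfold inDeg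
    rw [Finset.card_filter, Finset.card_filter]
    exact filter_card_eq hE₂def hux hyv hne huvE hyxE hne2 _ (by simp [add_comm])
  · intro w
    unfold outDeg
    rw [Finset.card_filter, Finset.card_filter]
    exact filter_card_eq hE₂def hux hyv hne huvE hyxE hne2 _ (by simp)
  · intro a b h
    induction h with
    | refl => exact Relation.ReflTransGen.refl
    | tail _ hstep' ih =>
      rcases hstep' with h' | h'
      · exact conn_trans ih (hstep _ _ h')
      · exact conn_trans ih (conn_symm (hstep _ _ h'))
  · exact conn_of_mem (Finset.mem_insert_self _ _)
  · intro e he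
    rcases Finset.mem_insert.mp he with h | h
    · exact Or.inr (Or.inl h)
    rcases Finset.mem_insert.mp h with h | h
    · exact Or.inr (Or.inr h)
    · exact Or.inl (hDsub e h).1

lemma connectify (G : V → V → Prop)
    (hGconn : ∀ p q : V, Relation.ReflTransGen G p q)
    (hexch : ∀ u v x y : V, G u x → G y v → G u v → G y x) :
    ∀ (M : ℕ) (E : Finset (V × V)),
      (Finset.univ.filter (fun p : V × V => ¬ Conn E p.1 p.2)).card ≤ M →
      (∀ e ∈ E, G e.1 e.2) → (∀ w, inDeg E w = outDeg E w) → (∀ w, 1 ≤ inDeg E w) →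
      ∃ E₂ : Finset (V × V), (∀ e ∈ E₂, G e.1 e.2) ∧
        (∀ w, inDeg E₂ w = inDeg E w ∧ outDeg E₂ w = outDeg E w) ∧
        (∀ a b, Conn E₂ a b) := by
  intro M
  induction M with
  | zero =>
    intro E hM hG hbal hdeg
    refine ⟨E, hG, fun w => ⟨rfl, rfl⟩, ?_⟩
    intro a b
    by_contra hc
    have : (a, b) ∈ Finset.univ.filter (fun p : V × V => ¬ Conn E p.1 p.2) :=
      Finset.mem_filter.mpr ⟨Finset.mem_univ _, hc⟩
    have := Finset.card_pos.mpr ⟨_, this⟩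
    omega
  | succ M ih =>
    intro E hM hG hbal hdeg
    by_cases hall : ∀ a b : V, Conn E a b
    · exact ⟨E, hG, fun w => ⟨rfl, rfl⟩, hall⟩
    push_neg at hall
    obtain ⟨p, q, hpq⟩ := hall
    -- find a bridge edge between components
    have hbridge : ∃ u v : V, G u v ∧ ¬ Conn E u v := by
      by_contra hc
      push_neg at hc
      have : ∀ a b, Relation.ReflTransGen G a b → Conn E a b := by
        intro a b h
        induction h with
        | refl => exact Relation.ReflTransGen.refl
        | tail _ hstep ih2 => exact conn_trans ih2 (hc _ _ hstep)
      exact hpq (this p q (hGconn p q))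
    obtain ⟨u, v, hGuv, hnc⟩ := hbridge
    -- u has an outgoing edge
    have hout : ∃ x, (u, x) ∈ E := by
      have h1 : 1 ≤ outDeg E u := (hbal u) ▸ hdeg u
      obtain ⟨e, he⟩ := Finset.card_pos.mp h1
      rw [Finset.mem_filter] at he
      exact ⟨e.2, by rw [← he.2]; exact he.1⟩
    have hin : ∃ y, (y, v) ∈ E := by
      obtain ⟨e, he⟩ := Finset.card_pos.mp (hdeg v)
      rw [Finset.mem_filter] at he
      exact ⟨e.1, by rw [← he.2]; exact he.1⟩
    obtain ⟨x, hux⟩ := hout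
    obtain ⟨y, hyv⟩ := hin
    obtain ⟨E₂, hin₂, hout₂, hmono₂, hcuv₂, hsub₂⟩ := swap_lemma hbal hnc hux hyv
    have hG₂ : ∀ e ∈ E₂, G e.1 e.2 := by
      intro e he
      rcases hsub₂ e he with h | h | h
      · exact hG e h
      · rw [h]; exact hGuv
      · rw [h]; exact hexch u v x y (hG _ hux) (hG _ hyv) hGuv
    have hssub : (Finset.univ.filter (fun p : V × V => ¬ Conn E₂ p.1 p.2)) ⊂
        (Finset.univ.filter (fun p : V × V => ¬ Conn E p.1 p.2)) := by
      constructor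
      · intro e he
        rw [Finset.mem_filter] at he ⊢
        exact ⟨he.1, fun h => he.2 (hmono₂ _ _ h)⟩
      · intro h
        have := h (Finset.mem_filter.mpr ⟨Finset.mem_univ (u, v), hnc⟩)
        exact (Finset.mem_filter.mp this).2 hcuv₂
    have hM₂ : (Finset.univ.filter (fun p : V × V => ¬ Conn E₂ p.1 p.2)).card ≤ M := by
      have := Finset.card_lt_card hssub
      omega
    have hbal₂ : ∀ w, inDeg E₂ w = outDeg E₂ w := by
      intro w; rw [hin₂, hout₂]; exact hbal w
    have hdeg₂ : ∀ w, 1 ≤ inDeg E₂ w := by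
      intro w; rw [hin₂]; exact hdeg w
    obtain ⟨E₃, h1, h2, h3⟩ := ih E₂ hM₂ hG₂ hbal₂ hdeg₂
    refine ⟨E₃, h1, ?_, h3⟩
    intro w
    exact ⟨(h2 w).1.trans (hin₂ w), (h2 w).2.trans (hout₂ w)⟩

end Aux

section DB

instance (k n : ℕ) : Fintype {w : List (Fin k) // w.length = n} :=
  inferInstanceAs (Fintype (List.Vector (Fin k) n))

/-- Exchange property of de Bruijn edges. -/
lemma db_exch {k n : ℕ} {u v x y : List (Fin k)}
    (h1 : deBruijnEdge n u x) (h2 : deBruijnEdge n y v) (h3 : deBruijnEdge n u v) :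
    deBruijnEdge n y x := by
  obtain ⟨a, b, t, ht, hu, hx⟩ := h1
  obtain ⟨a', b', t', ht', hy, hv⟩ := h2
  obtain ⟨a'', b'', t'', ht'', hu', hv'⟩ := h3
  have htt : t = t'' := by
    rw [hu] at hu'
    exact (List.cons.injEq _ _ _ _ ▸ hu').2
  have ht2 : t' = t := by
    have : t' ++ [b'] = t ++ [b''] := by rw [← hv, hv', htt]
    exact (List.append_inj' this rfl).1
  exact ⟨a', b, t, ht, by rw [hy, ht2], hx⟩

/-- One de Bruijn shift step. -/
lemma db_step {k n : ℕ} (hn : 1 ≤ n) {p : List (Fin k)} (hp : p.length = n)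
    (a : Fin k) (t : List (Fin k)) (b : Fin k) (hpt : p = a :: t) :
    deBruijnEdge n p (t ++ [b]) := by
  refine ⟨a, b, t, ?_, hpt, rfl⟩
  have := hp
  rw [hpt] at this
  simp at this
  omega

/-- The full de Bruijn graph is strongly connected. -/
lemma db_conn {k n : ℕ} (hn : 1 ≤ n) (p q : {w : List (Fin k) // w.length = n}) :
    Relation.ReflTransGen
      (fun a b : {w : List (Fin k) // w.length = n} => deBruijnEdge n a.val b.val) p q := by
  have key : ∀ i : ℕ, (hi : i ≤ n) → Relation.ReflTransGen
      (fun a b : {w : List (Fin k) // w.length = n} => deBruijnEdge n a.val b.val) p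
      ⟨p.val.drop i ++ q.val.take i, by
        simp [p.2, q.2]
        omega⟩ := by
    intro i
    induction i with
    | zero =>
      intro _
      have : (⟨p.val.drop 0 ++ q.val.take 0, by simp [p.2]⟩ :
          {w : List (Fin k) // w.length = n}) = p := by
        apply Subtype.ext
        simp
      rw [this]
    | succ i ih =>
      intro hi
      have hi' : i ≤ n := by omega
      have hilt : i < p.val.length := by rw [p.2]; omega
      have hiltq : i < q.val.length := by rw [q.2]; omega
      refine (ih hi').tail ?_
      have hdrop : p.val.drop i = p.val[i] :: p.val.drop (i + 1) :=
        List.drop_eq_getElem_cons hilt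
      have htake : q.val.take (i + 1) = q.val.take i ++ [q.val[i]] := by
        rw [List.take_succ, List.getElem?_eq_getElem hiltq]
        rfl
      show deBruijnEdge n (p.val.drop i ++ q.val.take i) (p.val.drop (i + 1) ++ q.val.take (i + 1))
      have hlen : (p.val.drop i ++ q.val.take i).length = n := by simp [p.2, q.2]; omega
      have := db_step hn hlen p.val[i] (p.val.drop (i + 1) ++ q.val.take i) q.val[i]
        (by rw [hdrop, List.cons_append])
      rw [htake]
      simpa [List.append_assoc] using this
  have := key n le_rfl
  have heq : (⟨p.val.drop n ++ q.val.take n, by simp [p.2, q.2]⟩ :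
      {w : List (Fin k) // w.length = n}) = q := by
    apply Subtype.ext
    simp [List.drop_eq_nil_of_le (le_of_eq p.2), List.take_of_length_le (le_of_eq q.2)]
  rwa [heq] at this

end DB

theorem stmt_4 (k n : ℕ) (hk : 2 ≤ k) (hn : 1 ≤ n)
    (E' : Finset ({w : List (Fin k) // w.length = n} × {w : List (Fin k) // w.length = n}))
    (hE' : ∀ e ∈ E', deBruijnEdge n e.1.val e.2.val)
    (hbal : ∀ v, inDeg E' v = outDeg E' v)
    (hdeg : ∀ v, 2 ≤ inDeg E' v + outDeg E' v) :
    ∃ E : Finset ({w : List (Fin k) // w.length = n} × {w : List (Fin k) // w.length = n}),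
      (∀ e ∈ E, deBruijnEdge n e.1.val e.2.val) ∧
      (∀ v, inDeg E v = inDeg E' v ∧ outDeg E v = outDeg E' v) ∧
      (∀ u v, Relation.ReflTransGen (fun a b => (a, b) ∈ E ∨ (b, a) ∈ E) u v) := by
  classical
  have hdeg1 : ∀ v, 1 ≤ inDeg E' v := by
    intro v
    have h1 := hdeg v
    have h2 := hbal v
    omega
  obtain ⟨E, h1, h2, h3⟩ := connectify
    (fun a b : {w : List (Fin k) // w.length = n} => deBruijnEdge n a.val b.val)
    (db_conn hn) (fun u v x y hux hyv huv => db_exch hux hyv huv)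
    _ E' le_rfl hE' hbal hdeg1
  exact ⟨E, h1, h2, h3⟩
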